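/- For all integers n ≥ 0, m ≥ 0, s ≥ 1 and every prime p ≥ 3, the polynomial congruence D_{n+m·p^s}(x) ≡ (x^{p^s} - 1)^m · D_n(x) holds modulo p, i.e. in (ℤ/pℤ)[x]. -/

import Mathlib

open Polynomial Finset

/-- The derangement polynomial `D_n(x) = ∑_{k=0}^n C(n,k)·k!·(x-1)^{n-k}`. -/
noncomputable def derPoly (n : ℕ) : Polynomial ℤ :=
  ∑ k ∈ Finset.range (n + 1), ((n.choose k * k.factorial : ℤ)) • (X - 1) ^ (n - k)

lemma choose_add_pow_congr {p : ℕ} (hp : p.Prime) (n s k : ℕ) (hs : 1 ≤ s) (hk : k < p) :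
    (((n + p ^ s).choose k : ℕ) : ZMod p) = ((n.choose k : ℕ) : ZMod p) := by
  rw [add_comm n (p ^ s), Nat.add_choose_eq, Nat.cast_sum]
  rw [Finset.sum_eq_single (0, k)]
  · simp
  · rintro ⟨a, b⟩ hab hne
    rw [Finset.HasAntidiagonal.mem_antidiagonal] at hab
    have ha : a ≠ 0 := by
      rintro rfl
      exact hne (by simp at hab ⊢; omega)
    have haq : a ≠ p ^ s := by
      have : p ≤ p ^ s := Nat.le_self_pow (by omega) p
      simp at hab; omega
    have hd : p ∣ (p ^ s).choose a := hp.dvd_choose_pow ha haq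
    have : (((p ^ s).choose a : ℕ) : ZMod p) = 0 :=
      (ZMod.natCast_eq_zero_iff _ _).mpr hd
    push_cast
    push_cast at this
    rw [this, zero_mul]
  · intro h
    exact absurd (by simp) h

lemma derPoly_map_eq {p : ℕ} (hp : p.Prime) (N : ℕ) :
    (derPoly N).map (Int.castRingHom (ZMod p)) =
      ∑ k ∈ Finset.range p, ((N.choose k * k.factorial : ℕ) : ZMod p) • (X - 1) ^ (N - k) := by
  have hmap : (derPoly N).map (Int.castRingHom (ZMod p)) =
      ∑ k ∈ Finset.range (N + 1),
        ((N.choose k * k.factorial : ℕ) : ZMod p) • (X - 1) ^ (N - k) := by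
    rw [derPoly, Polynomial.map_sum]
    refine Finset.sum_congr rfl fun k _ => ?_
    rw [Polynomial.smul_eq_C_mul, Polynomial.map_mul, Polynomial.map_pow,
      Polynomial.map_sub, Polynomial.map_C, Polynomial.map_X, Polynomial.map_one,
      Polynomial.smul_eq_C_mul]
    simp only [Int.coe_castRingHom]
    push_cast
    ring_nf
  rw [hmap]
  rw [Finset.sum_subset (Finset.range_subset_range.mpr (by omega : N + 1 ≤ N + 1 + p)),
    ← Finset.sum_subset (Finset.range_subset_range.mpr (by omega : p ≤ N + 1 + p))]
  · intro k _ hk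
    rw [Finset.mem_range, not_lt] at hk
    have : ((k.factorial : ℕ) : ZMod p) = 0 :=
      (ZMod.natCast_eq_zero_iff _ _).mpr (Nat.dvd_factorial hp.pos hk)
    rw [Nat.cast_mul, this, mul_zero, zero_smul]
  · intro k _ hk
    rw [Finset.mem_range, not_lt] at hk
    rw [Nat.choose_eq_zero_of_lt (by omega), Nat.zero_mul, Nat.cast_zero, zero_smul]

lemma derPoly_step {p : ℕ} (hp : p.Prime) (s n : ℕ) (hs : 1 ≤ s) :
    (derPoly (n + p ^ s)).map (Int.castRingHom (ZMod p)) =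
      (X ^ p ^ s - 1) * (derPoly n).map (Int.castRingHom (ZMod p)) := by
  haveI : Fact p.Prime := ⟨hp⟩
  have hXq : ((X : Polynomial (ZMod p)) - 1) ^ p ^ s = X ^ p ^ s - 1 := by
    have := sub_pow_char_pow (R := Polynomial (ZMod p)) (p := p) (n := s) X 1
    simpa using this
  rw [derPoly_map_eq hp, derPoly_map_eq hp, ← hXq, Finset.mul_sum]
  refine Finset.sum_congr rfl fun k hk => ?_
  rw [Finset.mem_range] at hk
  rw [Nat.cast_mul, Nat.cast_mul, choose_add_pow_congr hp n s k hs hk]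
  by_cases hkn : k ≤ n
  · have h1 : n + p ^ s - k = p ^ s + (n - k) := by omega
    rw [h1, pow_add, mul_smul_comm]
  · rw [Nat.choose_eq_zero_of_lt (by omega), Nat.cast_zero, zero_mul, zero_smul,
      zero_smul, mul_zero]

theorem derPoly_congr (n m s : ℕ) (hs : 1 ≤ s) (p : ℕ) (hp : p.Prime) (hp3 : 3 ≤ p) :
    (derPoly (n + m * p ^ s)).map (Int.castRingHom (ZMod p)) =
      (X ^ (p ^ s) - 1) ^ m * (derPoly n).map (Int.castRingHom (ZMod p)) := by
  induction m with
  | zero => simp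
  | succ m ih =>
    have h : n + (m + 1) * p ^ s = (n + m * p ^ s) + p ^ s := by ring
    rw [h, derPoly_step hp s _ hs, ih, pow_succ]
    ring
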